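/- Assume ω₁² > α/β > ω₂² with β > 0 and ω₁ ≠ ω₂, ω₁, ω₂ > 0. Then the quadratic form H(x, ẋ, ẍ, x⃛) = ½[(x⃛+ω₁²ẋ)² + ω₂²(ẍ+ω₁²x)²]/[(ω₁²−ω₂²)(α−βω₂²)] − ½[(x⃛+ω₂²ẋ)² + ω₁²(ẍ+ω₂²x)²]/[(ω₁²−ω₂²)(α−βω₁²)] is positive definite on ℝ⁴. -/

import Mathlib

set_option maxHeartbeats 1000000


/-- positive definiteness of the Pais–Uhlenbeck Hamiltonian for anchor parameters
with `ω₁² > α/β > ω₂²`, `β > 0`.  Here `z = (x, ẋ, ẍ, x⃛) ∈ ℝ⁴`. -/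
theorem pais_uhlenbeck_hamiltonian_positive_definite
    (α β ω₁ ω₂ : ℝ) (hβ : 0 < β) (hω₁ : 0 < ω₁) (hω₂ : 0 < ω₂) (hne : ω₁ ≠ ω₂)
    (h₁ : ω₁ ^ 2 > α / β) (h₂ : α / β > ω₂ ^ 2)
    (H : (Fin 4 → ℝ) → ℝ)
    (hH : H = fun z =>
      (1/2) * ((z 3 + ω₁ ^ 2 * z 1) ^ 2 + ω₂ ^ 2 * (z 2 + ω₁ ^ 2 * z 0) ^ 2) /
        ((ω₁ ^ 2 - ω₂ ^ 2) * (α - β * ω₂ ^ 2)) -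
      (1/2) * ((z 3 + ω₂ ^ 2 * z 1) ^ 2 + ω₁ ^ 2 * (z 2 + ω₂ ^ 2 * z 0) ^ 2) /
        ((ω₁ ^ 2 - ω₂ ^ 2) * (α - β * ω₁ ^ 2))) :
    ∀ z : Fin 4 → ℝ, z ≠ 0 → 0 < H z := by
  intro z hz
  have ha : (0:ℝ) < ω₁ ^ 2 := pow_pos hω₁ 2
  have hb : (0:ℝ) < ω₂ ^ 2 := pow_pos hω₂ 2
  have hab : ω₂ ^ 2 < ω₁ ^ 2 := lt_trans h₂ h₁
  have hA : (0:ℝ) < ω₁ ^ 2 - ω₂ ^ 2 := sub_pos.mpr hab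
  have hP : (0:ℝ) < α - β * ω₂ ^ 2 := by
    have := (lt_div_iff₀ hβ).mp h₂
    nlinarith
  have hQ : (0:ℝ) < β * ω₁ ^ 2 - α := by
    have := (div_lt_iff₀ hβ).mp h₁
    nlinarith
  have hD1 : (0:ℝ) < (ω₁ ^ 2 - ω₂ ^ 2) * (α - β * ω₂ ^ 2) := mul_pos hA hP
  have hD2 : (0:ℝ) < (ω₁ ^ 2 - ω₂ ^ 2) * (β * ω₁ ^ 2 - α) := mul_pos hA hQ
  set r1 := z 3 + ω₁ ^ 2 * z 1 with hr1
  set s1 := z 2 + ω₁ ^ 2 * z 0 with hs1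
  set r2 := z 3 + ω₂ ^ 2 * z 1 with hr2
  set s2 := z 2 + ω₂ ^ 2 * z 0 with hs2
  have hrw : H z = (1/2) * (r1 ^ 2 + ω₂ ^ 2 * s1 ^ 2) / ((ω₁ ^ 2 - ω₂ ^ 2) * (α - β * ω₂ ^ 2))
      + (1/2) * (r2 ^ 2 + ω₁ ^ 2 * s2 ^ 2) / ((ω₁ ^ 2 - ω₂ ^ 2) * (β * ω₁ ^ 2 - α)) := by
    rw [hH]
    have hQ' : α - β * ω₁ ^ 2 ≠ 0 := by nlinarith
    have hP' : α - β * ω₂ ^ 2 ≠ 0 := hP.ne'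
    have hA' : ω₁ ^ 2 - ω₂ ^ 2 ≠ 0 := hA.ne'
    rw [hr1, hs1, hr2, hs2, show β * ω₁ ^ 2 - α = -(α - β * ω₁ ^ 2) by ring, mul_neg, div_neg]
    ring
  clear_value r1 s1 r2 s2
  have hres : (r1 ≠ 0 ∨ s1 ≠ 0) ∨ (r2 ≠ 0 ∨ s2 ≠ 0) := by
    by_contra h
    push_neg at h
    obtain ⟨⟨h1, h2⟩, h3, h4⟩ := h
    apply hz
    have hz1 : z 1 = 0 := by
      have h5 : (ω₁ ^ 2 - ω₂ ^ 2) * z 1 = 0 := by rw [hr1] at h1; rw [hr2] at h3; linarith [h1, h3]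
      rcases mul_eq_zero.mp h5 with h | h
      · exact absurd h hA.ne'
      · exact h
    have hz0 : z 0 = 0 := by
      have h5 : (ω₁ ^ 2 - ω₂ ^ 2) * z 0 = 0 := by rw [hs1] at h2; rw [hs2] at h4; linarith [h2, h4]
      rcases mul_eq_zero.mp h5 with h | h
      · exact absurd h hA.ne'
      · exact h
    have hz3 : z 3 = 0 := by rw [hr1, hz1] at h1; simpa using h1
    have hz2 : z 2 = 0 := by rw [hs1, hz0] at h2; simpa using h2
    funext i
    fin_cases i
    · exact hz0
    · exact hz1
    · exact hz2
    · exact hz3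
  have hn1 : (0:ℝ) ≤ (1/2) * (r1 ^ 2 + ω₂ ^ 2 * s1 ^ 2) := by nlinarith [sq_nonneg r1, sq_nonneg s1]
  have hn2 : (0:ℝ) ≤ (1/2) * (r2 ^ 2 + ω₁ ^ 2 * s2 ^ 2) := by nlinarith [sq_nonneg r2, sq_nonneg s2]
  rw [hrw]
  rcases hres with (h | h) | (h | h)
  · have : (0:ℝ) < (1/2) * (r1 ^ 2 + ω₂ ^ 2 * s1 ^ 2) := by
      have hr : 0 < r1 ^ 2 := (sq_nonneg r1).lt_of_ne' (pow_ne_zero 2 h)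
      have hs : 0 ≤ ω₂ ^ 2 * s1 ^ 2 := mul_nonneg (by positivity) (sq_nonneg s1)
      linarith
    have t1 := div_pos this hD1
    have t2 := div_nonneg hn2 hD2.le
    linarith
  · have : (0:ℝ) < (1/2) * (r1 ^ 2 + ω₂ ^ 2 * s1 ^ 2) := by
      have hr : 0 < ω₂ ^ 2 * s1 ^ 2 := mul_pos hb ((sq_nonneg s1).lt_of_ne' (pow_ne_zero 2 h))
      linarith [sq_nonneg r1]
    have t1 := div_pos this hD1
    have t2 := div_nonneg hn2 hD2.le
    linarith
  · have : (0:ℝ) < (1/2) * (r2 ^ 2 + ω₁ ^ 2 * s2 ^ 2) := by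
      have hr : 0 < r2 ^ 2 := (sq_nonneg r2).lt_of_ne' (pow_ne_zero 2 h)
      have hs : 0 ≤ ω₁ ^ 2 * s2 ^ 2 := mul_nonneg (by positivity) (sq_nonneg s2)
      linarith
    have t2 := div_pos this hD2
    have t1 := div_nonneg hn1 hD1.le
    linarith
  · have : (0:ℝ) < (1/2) * (r2 ^ 2 + ω₁ ^ 2 * s2 ^ 2) := by
      have hr : 0 < ω₁ ^ 2 * s2 ^ 2 := mul_pos ha ((sq_nonneg s2).lt_of_ne' (pow_ne_zero 2 h))
      linarith [sq_nonneg r2]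
    have t2 := div_pos this hD2
    have t1 := div_nonneg hn1 hD1.le
    linarith
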